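/- Let n ≥ 1 and λ ∈ (0, 2]. Then the softmax map σ_λ is firmly nonexpansive with respect to the Euclidean structure: for all x, y ∈ ℝⁿ, ‖σ_λ(x) − σ_λ(y)‖₂² ≤ ⟨σ_λ(x) − σ_λ(y), x − y⟩. -/

import Mathlib

open scoped ENNReal BigOperators

/-- The softmax function with inverse temperature `lam`. -/
noncomputable def softmax {n : ℕ} (lam : ℝ) (x : Fin n → ℝ) : Fin n → ℝ :=
  fun i => Real.exp (lam * x i) / ∑ j, Real.exp (lam * x j)

/-- The ℓ_p norm on `Fin n → ℝ`, for `p ∈ [1, ∞]`. -/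
noncomputable def lpNorm {n : ℕ} (p : ℝ≥0∞) (x : Fin n → ℝ) : ℝ :=
  if p = ⊤ then ⨆ i, |x i| else (∑ i, |x i| ^ p.toReal) ^ (1 / p.toReal)

/-- The ℓ_p-induced operator norm of a matrix. -/
noncomputable def opNorm {n m : ℕ} (p : ℝ≥0∞) (A : Matrix (Fin n) (Fin m) ℝ) : ℝ :=
  ⨆ v : {v : Fin m → ℝ // v ≠ 0}, lpNorm p (A.mulVec v.val) / lpNorm p v.val

/-- The matrix `Diag(s) - s sᵀ` (Jacobian of softmax with `lam = 1` at a point with value `s`). -/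
noncomputable def softmaxJac {n : ℕ} (s : Fin n → ℝ) : Matrix (Fin n) (Fin n) ℝ :=
  Matrix.diagonal s - Matrix.vecMulVec s s

/-- The open (interior of the) probability simplex. -/
def openSimplex (n : ℕ) : Set (Fin n → ℝ) :=
  {u | (∀ i, 0 < u i) ∧ ∑ i, u i = 1}

/-- The (closed) probability simplex. -/
def probSimplex (n : ℕ) : Set (Fin n → ℝ) :=
  {u | (∀ i, 0 ≤ u i) ∧ ∑ i, u i = 1}
lemma two_div_le_log {t : ℝ} (ht : 1 ≤ t) : 2 * (t - 1) / (t + 1) ≤ Real.log t := by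
  set f : ℝ → ℝ := fun s => Real.log s - 2 * (s - 1) / (s + 1) with hf
  have hd : ∀ s : ℝ, 0 < s → HasDerivAt f (s⁻¹ - 4 / (s + 1) ^ 2) s := by
    intro s hs
    have h1 : HasDerivAt Real.log s⁻¹ s := Real.hasDerivAt_log hs.ne'
    have h2 : HasDerivAt (fun u : ℝ => 2 * (u - 1) / (u + 1)) (4 / (s + 1) ^ 2) s := by
      have hne : s + 1 ≠ 0 := by positivity
      have ha : HasDerivAt (fun u : ℝ => 2 * (u - 1)) 2 s := by
        simpa using ((hasDerivAt_id s).sub_const 1).const_mul 2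
      have hb : HasDerivAt (fun u : ℝ => u + 1) 1 s := (hasDerivAt_id s).add_const 1
      have := ha.div hb hne
      exact this.congr_deriv (by ring)
    exact h1.sub h2
  have hmono : MonotoneOn f (Set.Ici (1:ℝ)) := by
    apply monotoneOn_of_deriv_nonneg (convex_Ici 1)
    · intro s hs
      have hs0 : (0:ℝ) < s := lt_of_lt_of_le one_pos hs
      exact (hd s hs0).continuousAt.continuousWithinAt
    · intro s hs
      rw [interior_Ici] at hs
      have hs0 : (0:ℝ) < s := lt_trans one_pos hs
      exact ((hd s hs0).differentiableAt).differentiableWithinAt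
    · intro s hs
      rw [interior_Ici] at hs
      have hs1 : (1:ℝ) < s := hs
      have hs0 : (0:ℝ) < s := lt_trans one_pos hs1
      rw [(hd s hs0).deriv]
      have h4 : 4 / (s + 1) ^ 2 ≤ s⁻¹ := by
        rw [div_le_iff₀ (by positivity), inv_mul_eq_div, le_div_iff₀ hs0]
        nlinarith [sq_nonneg (s - 1)]
      linarith
  have h1 : f 1 ≤ f t := hmono (Set.self_mem_Ici) ht ht
  have hf1 : f 1 = 0 := by simp [hf]
  have hft : f t = Real.log t - 2 * (t - 1) / (t + 1) := rfl
  rw [hf1, hft] at h1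
  linarith

lemma logmean_ineq {a b : ℝ} (ha : 0 < a) (hb : 0 < b) :
    2 * (a - b) ^ 2 / (a + b) ≤ (a - b) * (Real.log a - Real.log b) := by
  rcases le_total b a with hab | hab
  case _ =>
    set t := a / b with htdef
    have ht : 1 ≤ t := (one_le_div hb).2 hab
    have ht0 : (0:ℝ) < t + 1 := by linarith
    have key := two_div_le_log ht
    have ha' : a = t * b := by rw [htdef, div_mul_cancel₀ a hb.ne']
    have hb1 : 0 ≤ b * (t - 1) := mul_nonneg hb.le (by linarith)
    have hlog : Real.log a - Real.log b = Real.log t := by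
      rw [htdef, Real.log_div ha.ne' hb.ne']
    calc 2 * (a - b) ^ 2 / (a + b) = (b * (t - 1)) * (2 * (t - 1) / (t + 1)) := by
          rw [ha']; field_simp
      _ ≤ (b * (t - 1)) * Real.log t := mul_le_mul_of_nonneg_left key hb1
      _ = (a - b) * (Real.log a - Real.log b) := by rw [hlog, ha']; ring
  case _ =>
    set t := b / a with htdef
    have ht : 1 ≤ t := (one_le_div ha).2 hab
    have ht0 : (0:ℝ) < t + 1 := by linarith
    have key := two_div_le_log ht
    have hb' : b = t * a := by rw [htdef, div_mul_cancel₀ b ha.ne']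
    have ha1 : 0 ≤ a * (t - 1) := mul_nonneg ha.le (by linarith)
    have hlog : Real.log b - Real.log a = Real.log t := by
      rw [htdef, Real.log_div hb.ne' ha.ne']
    calc 2 * (a - b) ^ 2 / (a + b) = (a * (t - 1)) * (2 * (t - 1) / (t + 1)) := by
          rw [hb']; field_simp; ring
      _ ≤ (a * (t - 1)) * Real.log t := mul_le_mul_of_nonneg_left key ha1
      _ = (a - b) * (Real.log a - Real.log b) := by
          rw [show Real.log a - Real.log b = -(Real.log b - Real.log a) by ring, hlog, hb']; ring

lemma softmax_pos {n : ℕ} [Nonempty (Fin n)] (lam : ℝ) (x : Fin n → ℝ) (i : Fin n) :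
    0 < softmax lam x i :=
  div_pos (Real.exp_pos _) (Finset.sum_pos (fun j _ => Real.exp_pos _) Finset.univ_nonempty)

lemma softmax_sum {n : ℕ} [Nonempty (Fin n)] (lam : ℝ) (x : Fin n → ℝ) :
    ∑ i, softmax lam x i = 1 := by
  have hZ : (0:ℝ) < ∑ j, Real.exp (lam * x j) :=
    Finset.sum_pos (fun j _ => Real.exp_pos _) Finset.univ_nonempty
  simp only [softmax]
  rw [← Finset.sum_div, div_self hZ.ne']

lemma log_softmax {n : ℕ} [Nonempty (Fin n)] (lam : ℝ) (x : Fin n → ℝ) (i : Fin n) :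
    Real.log (softmax lam x i) = lam * x i - Real.log (∑ j, Real.exp (lam * x j)) := by
  have hZ : (0:ℝ) < ∑ j, Real.exp (lam * x j) :=
    Finset.sum_pos (fun j _ => Real.exp_pos _) Finset.univ_nonempty
  rw [softmax, Real.log_div (Real.exp_pos _).ne' hZ.ne', Real.log_exp]

/-- for lam ∈ (0, 2], softmax is firmly nonexpansive in the Euclidean structure. -/
theorem softmax_firmly_nonexpansive {n : ℕ} (hn : 1 ≤ n) (lam : ℝ)
    (hlam : 0 < lam) (hlam2 : lam ≤ 2) (x y : Fin n → ℝ) :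
    lpNorm 2 (softmax lam x - softmax lam y) ^ 2 ≤
      ∑ i, (softmax lam x i - softmax lam y i) * (x i - y i) := by
  haveI : Nonempty (Fin n) := Fin.pos_iff_nonempty.mp hn
  set p := softmax lam x with hp
  set q := softmax lam y with hq
  have hpi : ∀ i, 0 < p i := softmax_pos lam x
  have hqi : ∀ i, 0 < q i := softmax_pos lam y
  have hps : ∑ i, p i = 1 := softmax_sum lam x
  have hqs : ∑ i, q i = 1 := softmax_sum lam y
  -- S = symmetric KL
  set S := ∑ i, (p i - q i) * (Real.log (p i) - Real.log (q i)) with hS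
  -- identity : lam * ⟨p-q, x-y⟩ = S
  have hid : S = lam * ∑ i, (p i - q i) * (x i - y i) := by
    have : ∀ i, (p i - q i) * (Real.log (p i) - Real.log (q i)) =
        lam * ((p i - q i) * (x i - y i)) -
        (Real.log (∑ j, Real.exp (lam * x j)) - Real.log (∑ j, Real.exp (lam * y j)))
          * (p i - q i) := by
      intro i
      rw [hp, hq, log_softmax, log_softmax]
      ring
    rw [hS, Finset.sum_congr rfl (fun i _ => this i), Finset.sum_sub_distrib,
      ← Finset.mul_sum, ← Finset.mul_sum, Finset.sum_sub_distrib, hps, hqs]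
    ring
  -- Step 1: pointwise log-mean bound
  have step1 : ∑ i, 2 * (p i - q i) ^ 2 / (p i + q i) ≤ S := by
    apply Finset.sum_le_sum
    intro i _
    exact logmean_ineq (hpi i) (hqi i)
  -- Step 2: Cauchy-Schwarz
  have step2 : (∑ i, |p i - q i|) ^ 2 ≤ ∑ i, 2 * (p i - q i) ^ 2 / (p i + q i) := by
    have hcs := Finset.sum_mul_sq_le_sq_mul_sq Finset.univ
      (fun i => |p i - q i| / Real.sqrt ((p i + q i) / 2))
      (fun i => Real.sqrt ((p i + q i) / 2))
    have h1 : ∀ i : Fin n, |p i - q i| / Real.sqrt ((p i + q i) / 2) *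
        Real.sqrt ((p i + q i) / 2) = |p i - q i| := by
      intro i
      have : Real.sqrt ((p i + q i) / 2) ≠ 0 := by
        have := hpi i; have := hqi i
        positivity
      exact div_mul_cancel₀ _ this
    have h2 : ∀ i : Fin n, (|p i - q i| / Real.sqrt ((p i + q i) / 2)) ^ 2 =
        2 * (p i - q i) ^ 2 / (p i + q i) := by
      intro i
      have hpq : (0:ℝ) < (p i + q i) / 2 := by have := hpi i; have := hqi i; positivity
      rw [div_pow, sq_abs, Real.sq_sqrt hpq.le]
      field_simp
    have h3 : ∑ i, (Real.sqrt ((p i + q i) / 2)) ^ 2 = 1 := by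
      have : ∀ i : Fin n, (Real.sqrt ((p i + q i) / 2)) ^ 2 = (p i + q i) / 2 := by
        intro i
        exact Real.sq_sqrt (by have := hpi i; have := hqi i; positivity)
      rw [Finset.sum_congr rfl (fun i _ => this i)]
      rw [← Finset.sum_div, Finset.sum_add_distrib, hps, hqs]
      norm_num
    calc (∑ i, |p i - q i|) ^ 2
        = (∑ i, |p i - q i| / Real.sqrt ((p i + q i) / 2) * Real.sqrt ((p i + q i) / 2)) ^ 2 := by
          rw [Finset.sum_congr rfl (fun i _ => (h1 i).symm)]
      _ ≤ (∑ i, (|p i - q i| / Real.sqrt ((p i + q i) / 2)) ^ 2) *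
            ∑ i, (Real.sqrt ((p i + q i) / 2)) ^ 2 := hcs
      _ = ∑ i, 2 * (p i - q i) ^ 2 / (p i + q i) := by
          rw [h3, mul_one, Finset.sum_congr rfl (fun i _ => h2 i)]
  -- Step 3 : ℓ2² ≤ ½ ℓ1²
  have step3 : 2 * ∑ i, (p i - q i) ^ 2 ≤ (∑ i, |p i - q i|) ^ 2 := by
    set M := ∑ i, |p i - q i| with hM
    have hbound : ∀ i : Fin n, 2 * |p i - q i| ≤ M := by
      intro i
      have hsum0 : ∑ j, (p j - q j) = 0 := by
        rw [Finset.sum_sub_distrib, hps, hqs]; ring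
      have hsplit : p i - q i = -∑ j ∈ Finset.univ.erase i, (p j - q j) := by
        have h := Finset.add_sum_erase Finset.univ (fun j => p j - q j) (Finset.mem_univ i)
        rw [hsum0] at h
        linarith
      have habs : |p i - q i| ≤ ∑ j ∈ Finset.univ.erase i, |p j - q j| := by
        rw [hsplit, abs_neg]
        exact Finset.abs_sum_le_sum_abs _ _
      have : M = |p i - q i| + ∑ j ∈ Finset.univ.erase i, |p j - q j| := by
        rw [hM, ← Finset.add_sum_erase Finset.univ (fun j => |p j - q j|) (Finset.mem_univ i)]
      linarith
    have hM0 : 0 ≤ M := Finset.sum_nonneg (fun i _ => abs_nonneg _)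
    have : ∑ i, (p i - q i) ^ 2 ≤ ∑ i, |p i - q i| * (M / 2) := by
      apply Finset.sum_le_sum
      intro i _
      rw [← sq_abs]
      have h0 : (0:ℝ) ≤ |p i - q i| := abs_nonneg _
      have := hbound i
      nlinarith
    rw [← Finset.sum_mul] at this
    nlinarith
  -- combine
  have hsum_sq_nonneg : (0:ℝ) ≤ ∑ i, (p i - q i) ^ 2 :=
    Finset.sum_nonneg (fun i _ => sq_nonneg _)
  have hfinal : lam * ∑ i, (p i - q i) ^ 2 ≤ lam * ∑ i, (p i - q i) * (x i - y i) := by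
    rw [← hid]
    nlinarith
  have hkey : ∑ i, (p i - q i) ^ 2 ≤ ∑ i, (p i - q i) * (x i - y i) :=
    le_of_mul_le_mul_left hfinal hlam
  -- lpNorm computation
  have hnorm : lpNorm 2 (p - q) ^ 2 = ∑ i, (p i - q i) ^ 2 := by
    rw [lpNorm]
    have h2 : ((2:ℝ≥0∞) ≠ ⊤) := by norm_num
    rw [if_neg h2]
    have ht : ((2:ℝ≥0∞)).toReal = 2 := by norm_num
    rw [ht]
    have hs : ∀ i : Fin n, |(p - q) i| ^ (2:ℝ) = (p i - q i) ^ 2 := by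
      intro i
      rw [show ((2:ℝ)) = ((2:ℕ):ℝ) by norm_num, Real.rpow_natCast, sq_abs]
      rfl
    rw [Finset.sum_congr rfl (fun i _ => hs i)]
    rw [← Real.rpow_natCast ((∑ i, (p i - q i) ^ 2) ^ (1/(2:ℝ))) 2,
      ← Real.rpow_mul hsum_sq_nonneg]
    norm_num
  rw [hnorm]
  exact hkey
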